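/- Let A ⊆ A' be regular (closed densely defined) operators on a complex Hilbert space H such that the range of A' is closed in H. If Γ_A + (ker A' × {0}) is a closed subspace of H ⊕ H (equivalently, dom A + ker A' is closed in dom A' with respect to the graph norm), then the range of A is also closed in H. -/
import Mathlib


noncomputable section

/-- let `A ⊆ A'` be regular (closed densely defined) operators on a complex
Hilbert space `H` such that the range of `A'` is closed. If `Γ_A + (ker A' × {0})` is
closed in `H × H` (equivalently, `dom A + ker A'` is closed in `dom A'` for the graph
norm), then the range of `A` is closed. Here `ker A' × {0} = Γ_{A'} ∩ (H × {0})`. -/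
theorem statement_4
    {H : Type*} [NormedAddCommGroup H] [InnerProductSpace ℂ H] [CompleteSpace H]
    (A A' : H →ₗ.[ℂ] H)
    (hAgraph : IsClosed ((A.graph : Submodule ℂ (H × H)) : Set (H × H)))
    (hAdense : Dense ((A.domain : Submodule ℂ H) : Set H))
    (hA'graph : IsClosed ((A'.graph : Submodule ℂ (H × H)) : Set (H × H)))
    (hA'dense : Dense ((A'.domain : Submodule ℂ H) : Set H))
    (hle : A ≤ A')
    (hranA' : IsClosed ((LinearMap.range A'.toFun : Submodule ℂ H) : Set H))
    (hsum : IsClosed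
      ((A.graph ⊔ (A'.graph ⊓ (⊤ : Submodule ℂ H).prod (⊥ : Submodule ℂ H)) :
        Submodule ℂ (H × H)) : Set (H × H))) :
    IsClosed ((LinearMap.range A.toFun : Submodule ℂ H) : Set H) := by
  classical
  set S : Submodule ℂ (H × H) :=
    A.graph ⊔ (A'.graph ⊓ (⊤ : Submodule ℂ H).prod (⊥ : Submodule ℂ H)) with hSdef
  haveI : CompleteSpace A'.graph := hA'graph.completeSpace_coe
  set R : Submodule ℂ H := LinearMap.range A'.toFun with hRdef
  haveI : CompleteSpace R := hranA'.completeSpace_coe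
  have hmem : ∀ p : A'.graph, (p : H × H).2 ∈ R := by
    intro p
    rcases A'.mem_graph_iff.mp p.2 with ⟨x, _, hx2⟩
    exact ⟨x, hx2⟩
  let f : A'.graph →L[ℂ] R :=
    ((ContinuousLinearMap.snd ℂ H H).comp A'.graph.subtypeL).codRestrict R hmem
  have hfval : ∀ p : A'.graph, (f p : H) = (p : H × H).2 := fun p => rfl
  have hsurj : Function.Surjective f := by
    rintro ⟨y, hy⟩
    rcases hy with ⟨x, hx⟩
    refine ⟨⟨(↑x, A' x), A'.mem_graph x⟩, ?_⟩
    exact Subtype.ext hx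
  -- the saturated closed set
  set C : Set A'.graph := Subtype.val ⁻¹' (S : Set (H × H)) with hCdef
  have hCclosed : IsClosed C := hsum.preimage continuous_subtype_val
  have hsat : f ⁻¹' (f '' C) = C := by
    apply Set.Subset.antisymm
    · rintro p ⟨q, hq, hfq⟩
      have h2 : (p : H × H).2 = (q : H × H).2 := by
        have := congrArg Subtype.val hfq
        simpa [hfval] using this.symm
      have hdiff : (p : H × H) - (q : H × H) ∈ S := by
        refine le_sup_right (α := Submodule ℂ (H × H)) ?_
        refine ⟨sub_mem p.2 q.2, ?_⟩
        refine Submodule.mem_prod.mpr ⟨trivial, ?_⟩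
        simp [h2]
      have heq : (p : H × H) = ((p : H × H) - (q : H × H)) + (q : H × H) :=
        (sub_add_cancel _ _).symm
      have hq' : (q : H × H) ∈ S := hq
      show (p : H × H) ∈ S
      rw [heq]
      exact S.add_mem hdiff hq'
    · exact Set.subset_preimage_image f C
  have himclosed : IsClosed (f '' C) := by
    have hqm := f.isQuotientMap hsurj
    rw [← hqm.isClosed_preimage, hsat]
    exact hCclosed
  have hset : ((LinearMap.range A.toFun : Submodule ℂ H) : Set H)
      = Subtype.val '' (f '' C) := by
    ext y
    constructor
    · rintro ⟨x, rfl⟩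
      have hgr : ((x : H), A x) ∈ A.graph := A.mem_graph x
      have hgr' : ((x : H), A x) ∈ A'.graph := LinearPMap.le_graph_of_le hle hgr
      refine ⟨f ⟨((x : H), A x), hgr'⟩, ⟨⟨((x : H), A x), hgr'⟩, ?_, rfl⟩, rfl⟩
      exact le_sup_left (α := Submodule ℂ (H × H)) hgr
    · rintro ⟨z, ⟨p, hp, rfl⟩, rfl⟩
      have hpS : (p : H × H) ∈ S := hp
      rcases Submodule.mem_sup.mp hpS with ⟨a, ha, b, hb, hab⟩
      rcases A.mem_graph_iff.mp ha with ⟨u, hu1, hu2⟩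
      have hb2 : b.2 = 0 := (Submodule.mem_prod.mp hb.2).2
      refine ⟨u, ?_⟩
      have : (p : H × H).2 = a.2 + b.2 := by rw [← hab]; rfl
      show ↑(A u) = _
      rw [hfval, this, hb2, add_zero, ← hu2]
  rw [hset]
  have hemb : Topology.IsClosedEmbedding (Subtype.val : R → H) :=
    hranA'.isClosedEmbedding_subtypeVal
  exact hemb.isClosedMap _ himclosed
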